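/- The space E_III is primitive: for every 5-dimensional subspace H ⊆ ℂ^6 there exists a ∈ ℂ^6 such that the restriction of the linear map M_III(a) : ℂ^6 → ℂ^6 to H has rank at least 4, and for every 5-dimensional subspace H' ⊆ ℂ^6 there exists a ∈ ℂ^6 such that the restriction of the transpose map M_III(a)ᵀ : ℂ^6 → ℂ^6 to H' has rank at least 4. -/

import Mathlib

open Matrix

/-- Case (III) of the main theorem: for `a = (a1,…,a6) ∈ ℂ^6`, the matrix `M_III(a)`. -/
noncomputable def MIII (a : Fin 6 → ℂ) : Matrix (Fin 6) (Fin 6) ℂ :=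
  !![a 0, 0, 0, 0, -a 2, -a 4;
     0, a 0, 0, 0, -a 3, -a 5;
     0, 0, a 0, 0, a 1, 0;
     0, 0, 0, a 0, 0, a 1;
     a 1, 0, a 2, a 4, 0, 0;
     0, a 1, a 3, a 5, 0, 0]

private lemma cvA {α : Type*} (x : α) (u : Fin 5 → α) : vecCons x u 5 = u 4 := rfl
private lemma cvB {α : Type*} (x : α) (u : Fin 4 → α) : vecCons x u 4 = u 3 := rfl
private lemma cvC {α : Type*} (x : α) (u : Fin 3 → α) : vecCons x u 3 = u 2 := rfl
private lemma cvD {α : Type*} (x : α) (u : Fin 2 → α) : vecCons x u 2 = u 1 := rfl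
private lemma cvE {α : Type*} (x : α) (u : Fin 1 → α) : vecCons x u 1 = u 0 := rfl

/-- Key abstract lemma: if the kernel of `f` is contained in the span of two vectors and
contains a vector outside the hyperplane `H`, then `f(H)` has dimension at least `4`. -/
private lemma keyA (f : (Fin 6 → ℂ) →ₗ[ℂ] (Fin 6 → ℂ)) (H : Submodule ℂ (Fin 6 → ℂ))
    (hH : Module.finrank ℂ H = 5) (p q v : Fin 6 → ℂ)
    (hker : LinearMap.ker f ≤ Submodule.span ℂ {p, q})
    (hv : v ∈ LinearMap.ker f) (hvH : v ∉ H) :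
    4 ≤ Module.finrank ℂ (H.map f) := by
  have hkf : Module.finrank ℂ (LinearMap.ker f) ≤ 2 := by
    refine le_trans (Submodule.finrank_mono hker) ?_
    refine le_trans (finrank_span_le_card ({p, q} : Set (Fin 6 → ℂ))) ?_
    classical
    calc ({p, q} : Set (Fin 6 → ℂ)).toFinset.card
        ≤ ({q} : Set (Fin 6 → ℂ)).toFinset.card + 1 := by
          rw [Set.toFinset_insert]; exact Finset.card_insert_le _ _
      _ ≤ 2 := by simp
  have hlt : H ⊓ LinearMap.ker f < LinearMap.ker f := by
    refine lt_of_le_of_ne inf_le_right ?_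
    intro h
    rw [← h] at hv
    exact hvH hv.1
  have hKle : Module.finrank ℂ (H ⊓ LinearMap.ker f : Submodule ℂ (Fin 6 → ℂ)) ≤ 1 := by
    have := Submodule.finrank_lt_finrank_of_lt hlt
    omega
  have hrn := LinearMap.finrank_range_add_finrank_ker (f.domRestrict H)
  rw [LinearMap.range_domRestrict] at hrn
  have hkd : Module.finrank ℂ (LinearMap.ker (f.domRestrict H)) =
      Module.finrank ℂ (H ⊓ LinearMap.ker f : Submodule ℂ (Fin 6 → ℂ)) := by
    rw [LinearMap.ker_domRestrict,
      ← Submodule.finrank_map_subtype_eq H ((LinearMap.ker f).comap H.subtype),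
      Submodule.map_comap_subtype]
  rw [hkd, hH] at hrn
  omega

private lemma kerMIII (a : Fin 6 → ℂ) (ha : a 0 = 1) :
    LinearMap.ker (MIII a).mulVecLin ≤
      Submodule.span ℂ {![a 2, a 3, -a 1, 0, 1, 0], ![a 4, a 5, 0, -a 1, 0, 1]} := by
  intro x hx
  rw [LinearMap.mem_ker] at hx
  have h0 := congrFun hx 0
  have h1 := congrFun hx 1
  have h2 := congrFun hx 2
  have h3 := congrFun hx 3
  simp [MIII, mulVecLin_apply, mulVec, dotProduct, Fin.sum_univ_six, ha,
    cvA, cvB, cvC, cvD, cvE] at h0 h1 h2 h3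
  have hxeq : x = x 4 • ![a 2, a 3, -a 1, 0, 1, 0] + x 5 • ![a 4, a 5, 0, -a 1, 0, 1] := by
    funext i
    fin_cases i
    · show x 0 = x 4 * a 2 + x 5 * a 4; linear_combination h0
    · show x 1 = x 4 * a 3 + x 5 * a 5; linear_combination h1
    · show x 2 = x 4 * (-a 1) + x 5 * 0; linear_combination h2
    · show x 3 = x 4 * 0 + x 5 * (-a 1); linear_combination h3
    · show x 4 = x 4 * 1 + x 5 * 0; ring
    · show x 5 = x 4 * 0 + x 5 * 1; ring
  rw [hxeq]
  exact Submodule.add_mem _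
    (Submodule.smul_mem _ _ (Submodule.subset_span (Or.inl rfl)))
    (Submodule.smul_mem _ _ (Submodule.subset_span (Or.inr rfl)))

private lemma kerMIIIT (a : Fin 6 → ℂ) (ha : a 0 = 1) :
    LinearMap.ker ((MIII a).transpose).mulVecLin ≤
      Submodule.span ℂ {![-a 1, 0, -a 2, -a 4, 1, 0], ![0, -a 1, -a 3, -a 5, 0, 1]} := by
  intro x hx
  rw [LinearMap.mem_ker] at hx
  have h0 := congrFun hx 0
  have h1 := congrFun hx 1
  have h2 := congrFun hx 2
  have h3 := congrFun hx 3
  simp only [mulVecLin_apply, mulVec, dotProduct, transpose_apply, Fin.sum_univ_six,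
    Pi.zero_apply] at h0 h1 h2 h3
  simp [MIII, ha, Matrix.vecHead, Matrix.vecTail, cvA, cvB, cvC, cvD, cvE] at h0 h1 h2 h3
  have hxeq : x = x 4 • ![-a 1, 0, -a 2, -a 4, 1, 0] + x 5 • ![0, -a 1, -a 3, -a 5, 0, 1] := by
    funext i
    fin_cases i
    · show x 0 = x 4 * (-a 1) + x 5 * 0; linear_combination h0
    · show x 1 = x 4 * 0 + x 5 * (-a 1); linear_combination h1
    · show x 2 = x 4 * (-a 2) + x 5 * (-a 3); linear_combination h2
    · show x 3 = x 4 * (-a 4) + x 5 * (-a 5); linear_combination h3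
    · show x 4 = x 4 * 1 + x 5 * 0; ring
    · show x 5 = x 4 * 0 + x 5 * 1; ring
  rw [hxeq]
  exact Submodule.add_mem _
    (Submodule.smul_mem _ _ (Submodule.subset_span (Or.inl rfl)))
    (Submodule.smul_mem _ _ (Submodule.subset_span (Or.inr rfl)))

private lemma memker (a : Fin 6 → ℂ) (ha : a 0 = 1) :
    ![a 2, a 3, -a 1, 0, 1, 0] ∈ LinearMap.ker (MIII a).mulVecLin ∧
    ![a 4, a 5, 0, -a 1, 0, 1] ∈ LinearMap.ker (MIII a).mulVecLin := by
  constructor <;>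
  · rw [LinearMap.mem_ker]
    funext i
    fin_cases i <;>
      simp [MIII, mulVecLin_apply, mulVec, dotProduct, Fin.sum_univ_six, ha,
        cvA, cvB, cvC, cvD, cvE] <;> ring

private lemma memkerT (a : Fin 6 → ℂ) (ha : a 0 = 1) :
    ![-a 1, 0, -a 2, -a 4, 1, 0] ∈ LinearMap.ker ((MIII a).transpose).mulVecLin ∧
    ![0, -a 1, -a 3, -a 5, 0, 1] ∈ LinearMap.ker ((MIII a).transpose).mulVecLin := by
  constructor <;>
  · rw [LinearMap.mem_ker]
    funext i
    fin_cases i <;>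
    · simp only [mulVecLin_apply, mulVec, dotProduct, transpose_apply, Fin.sum_univ_six,
        Pi.zero_apply]
      simp [MIII, ha, Matrix.vecHead, Matrix.vecTail, cvA, cvB, cvC, cvD, cvE]
      try ring

/-- If a hyperplane contains all six standard basis vectors, contradiction with finrank 5. -/
private lemma topcase (H : Submodule ℂ (Fin 6 → ℂ)) (hH : Module.finrank ℂ H = 5)
    (h : ∀ i : Fin 6, (fun j => if i = j then (1:ℂ) else 0) ∈ H) : False := by
  have htop : H = ⊤ := by
    rw [Submodule.eq_top_iff']
    intro x
    rw [pi_eq_sum_univ x]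
    exact Submodule.sum_mem _ fun i _ => Submodule.smul_mem _ _ (h i)
  rw [htop, finrank_top, Module.finrank_fin_fun] at hH
  omega

theorem stmt3 :
    (∀ H : Submodule ℂ (Fin 6 → ℂ), Module.finrank ℂ H = 5 →
      ∃ a : Fin 6 → ℂ, 4 ≤ Module.finrank ℂ (H.map (MIII a).mulVecLin)) ∧
    (∀ H' : Submodule ℂ (Fin 6 → ℂ), Module.finrank ℂ H' = 5 →
      ∃ a : Fin 6 → ℂ, 4 ≤ Module.finrank ℂ (H'.map ((MIII a).transpose).mulVecLin)) := by
  constructor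
  · intro H hH
    by_contra hcon
    push_neg at hcon
    have hmem : ∀ a : Fin 6 → ℂ, a 0 = 1 →
        ![a 2, a 3, -a 1, 0, 1, 0] ∈ H ∧ ![a 4, a 5, 0, -a 1, 0, 1] ∈ H := by
      intro a ha
      constructor <;> by_contra hv
      · exact absurd (keyA _ H hH _ _ _ (kerMIII a ha) (memker a ha).1 hv)
          (not_le.mpr (hcon a))
      · exact absurd (keyA _ H hH _ _ _ (kerMIII a ha) (memker a ha).2 hv)
          (not_le.mpr (hcon a))
    have h0 := hmem ![1,0,0,0,0,0] rfl
    have h1 := hmem ![1,1,0,0,0,0] rfl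
    have h2 := hmem ![1,0,1,0,0,0] rfl
    have h3 := hmem ![1,0,0,1,0,0] rfl
    refine topcase H hH ?_
    intro i
    fin_cases i
    · have := H.sub_mem h2.1 h0.1
      convert this using 1
      funext j; fin_cases j <;> simp [Fin.ext_iff]
    · have := H.sub_mem h3.1 h0.1
      convert this using 1
      funext j; fin_cases j <;> simp [Fin.ext_iff]
    · have := H.sub_mem h0.1 h1.1
      convert this using 1
      funext j; fin_cases j <;> simp [Fin.ext_iff]
    · have := H.sub_mem h0.2 h1.2
      convert this using 1
      funext j; fin_cases j <;> simp [Fin.ext_iff]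
    · convert h0.1 using 1
      funext j; fin_cases j <;> simp [Fin.ext_iff]
    · convert h0.2 using 1
      funext j; fin_cases j <;> simp [Fin.ext_iff]
  · intro H hH
    by_contra hcon
    push_neg at hcon
    have hmem : ∀ a : Fin 6 → ℂ, a 0 = 1 →
        ![-a 1, 0, -a 2, -a 4, 1, 0] ∈ H ∧ ![0, -a 1, -a 3, -a 5, 0, 1] ∈ H := by
      intro a ha
      constructor <;> by_contra hv
      · exact absurd (keyA _ H hH _ _ _ (kerMIIIT a ha) (memkerT a ha).1 hv)
          (not_le.mpr (hcon a))
      · exact absurd (keyA _ H hH _ _ _ (kerMIIIT a ha) (memkerT a ha).2 hv)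
          (not_le.mpr (hcon a))
    have h0 := hmem ![1,0,0,0,0,0] rfl
    have h1 := hmem ![1,1,0,0,0,0] rfl
    have h2 := hmem ![1,0,1,0,0,0] rfl
    have h4 := hmem ![1,0,0,0,1,0] rfl
    refine topcase H hH ?_
    intro i
    fin_cases i
    · have := H.sub_mem h0.1 h1.1
      convert this using 1
      funext j; fin_cases j <;> simp [Fin.ext_iff]
    · have := H.sub_mem h0.2 h1.2
      convert this using 1
      funext j; fin_cases j <;> simp [Fin.ext_iff]
    · have := H.sub_mem h0.1 h2.1
      convert this using 1
      funext j; fin_cases j <;> simp [Fin.ext_iff]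
    · have := H.sub_mem h0.1 h4.1
      convert this using 1
      funext j; fin_cases j <;> simp [Fin.ext_iff]
    · convert h0.1 using 1
      funext j; fin_cases j <;> simp [Fin.ext_iff]
    · convert h0.2 using 1
      funext j; fin_cases j <;> simp [Fin.ext_iff]
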